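/- Let I ⊆ ℝ be a nonempty open interval, τ, κ ∈ ℝ, ε₁ ∈ {−1, 1}, and f₁, f₂ : I → ℝ twice differentiable functions satisfying on I: f₁'' = −(f₁')² − f₁'·f₂' − τε₁/6 and f₂'' = (κε₁/2)·e^{−2f₂} − (3/2)·(f₂')² − (1/2)·f₁'·f₂' − τε₁/6. Then the function C₁ := e^{2f₂}·(f₁' − f₂')·(3f₁'f₂' + τε₁) − 3κε₁·f₁' is differentiable on I with C₁'(t) = (3/2)·f₁'(t)·(3κε₁·f₁'(t) − e^{2f₂(t)}·(f₁'(t) − f₂'(t))·(4f₂'(t)² + 5f₁'(t)f₂'(t) + τε₁)) for all t ∈ I. In particular, if C₁ ≡ 0 on I, then f₁'·(3κε₁f₁' − e^{2f₂}(f₁' − f₂')(4(f₂')² + 5f₁'f₂' + τε₁)) ≡ 0 on I. -/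

import Mathlib

/-- The function C₁ = e^{2f₂}(f₁' − f₂')(3f₁'f₂' + τε₁) − 3κε₁f₁'. -/
noncomputable def C₁ (τ κ ε₁ : ℝ) (f₁' f₂ f₂' : ℝ → ℝ) (t : ℝ) : ℝ :=
  Real.exp (2 * f₂ t) * (f₁' t - f₂' t) * (3 * f₁' t * f₂' t + τ * ε₁)
    - 3 * κ * ε₁ * f₁' t

/-- If f₁, f₂ are twice differentiable on a nonempty open interval I and satisfy
f₁'' = −f₁'² − f₁'f₂' − τε₁/6 and f₂'' = (κε₁/2)e^{−2f₂} − (3/2)f₂'² − (1/2)f₁'f₂' − τε₁/6,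
then C₁ is differentiable on I with
C₁' = (3/2)f₁'(3κε₁f₁' − e^{2f₂}(f₁' − f₂')(4f₂'² + 5f₁'f₂' + τε₁)); in particular,
if C₁ ≡ 0 on I then f₁'(3κε₁f₁' − e^{2f₂}(f₁' − f₂')(4f₂'² + 5f₁'f₂' + τε₁)) ≡ 0 on I. -/
theorem deriv_C₁
    (I : Set ℝ) (hIopen : IsOpen I) (hIne : I.Nonempty) (hIconn : I.OrdConnected)
    (τ κ ε₁ : ℝ) (hε : ε₁ = -1 ∨ ε₁ = 1)
    (f₁ f₁' f₁'' f₂ f₂' f₂'' : ℝ → ℝ)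
    (hdf₁ : ∀ t ∈ I, HasDerivAt f₁ (f₁' t) t)
    (hdf₁' : ∀ t ∈ I, HasDerivAt f₁' (f₁'' t) t)
    (hdf₂ : ∀ t ∈ I, HasDerivAt f₂ (f₂' t) t)
    (hdf₂' : ∀ t ∈ I, HasDerivAt f₂' (f₂'' t) t)
    (heq1 : ∀ t ∈ I, f₁'' t = -(f₁' t) ^ 2 - f₁' t * f₂' t - τ * ε₁ / 6)
    (heq2 : ∀ t ∈ I, f₂'' t = (κ * ε₁ / 2) * Real.exp (-(2 * f₂ t))
        - (3 / 2) * (f₂' t) ^ 2 - (1 / 2) * f₁' t * f₂' t - τ * ε₁ / 6) :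
    (∀ t ∈ I, HasDerivAt (C₁ τ κ ε₁ f₁' f₂ f₂')
      ((3 / 2) * f₁' t * (3 * κ * ε₁ * f₁' t
        - Real.exp (2 * f₂ t) * (f₁' t - f₂' t)
          * (4 * (f₂' t) ^ 2 + 5 * f₁' t * f₂' t + τ * ε₁))) t) ∧
    ((∀ t ∈ I, C₁ τ κ ε₁ f₁' f₂ f₂' t = 0) →
      ∀ t ∈ I, f₁' t * (3 * κ * ε₁ * f₁' t
        - Real.exp (2 * f₂ t) * (f₁' t - f₂' t)
          * (4 * (f₂' t) ^ 2 + 5 * f₁' t * f₂' t + τ * ε₁)) = 0) := by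
  have hmain : ∀ t ∈ I, HasDerivAt (C₁ τ κ ε₁ f₁' f₂ f₂')
      ((3 / 2) * f₁' t * (3 * κ * ε₁ * f₁' t
        - Real.exp (2 * f₂ t) * (f₁' t - f₂' t)
          * (4 * (f₂' t) ^ 2 + 5 * f₁' t * f₂' t + τ * ε₁))) t := by
    intro t ht
    have hE : HasDerivAt (fun t => Real.exp (2 * f₂ t))
        (Real.exp (2 * f₂ t) * (2 * f₂' t)) t :=
      (((hdf₂ t ht).const_mul 2).exp)
    have h1 : HasDerivAt (fun t => f₁' t - f₂' t) (f₁'' t - f₂'' t) t :=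
      (hdf₁' t ht).sub (hdf₂' t ht)
    have h2 : HasDerivAt (fun t => 3 * f₁' t * f₂' t + τ * ε₁)
        (3 * f₁'' t * f₂' t + 3 * f₁' t * f₂'' t) t := by
      have := (((hdf₁' t ht).const_mul 3).mul (hdf₂' t ht)).add_const (τ * ε₁)
      exact this
    have hd : HasDerivAt (C₁ τ κ ε₁ f₁' f₂ f₂')
        ((Real.exp (2 * f₂ t) * (2 * f₂' t) * (f₁' t - f₂' t)
            + Real.exp (2 * f₂ t) * (f₁'' t - f₂'' t))
          * (3 * f₁' t * f₂' t + τ * ε₁)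
          + Real.exp (2 * f₂ t) * (f₁' t - f₂' t)
            * (3 * f₁'' t * f₂' t + 3 * f₁' t * f₂'' t)
          - 3 * κ * ε₁ * f₁'' t) t :=
      ((hE.mul h1).mul h2).sub ((hdf₁' t ht).const_mul (3 * κ * ε₁))
    convert hd using 1
    rw [heq1 t ht, heq2 t ht]
    have hexp : Real.exp (-(2 * f₂ t)) = (Real.exp (2 * f₂ t))⁻¹ := Real.exp_neg _
    rw [hexp]
    have hpos : Real.exp (2 * f₂ t) ≠ 0 := (Real.exp_pos _).ne'
    field_simp
    ring
  refine ⟨hmain, fun hC0 t ht => ?_⟩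
  have hzero : HasDerivAt (C₁ τ κ ε₁ f₁' f₂ f₂') 0 t := by
    have : (C₁ τ κ ε₁ f₁' f₂ f₂') =ᶠ[nhds t] (fun _ => (0 : ℝ)) :=
      Filter.eventuallyEq_of_mem (hIopen.mem_nhds ht) hC0
    exact (hasDerivAt_const t (0:ℝ)).congr_of_eventuallyEq this
  have := (hmain t ht).unique hzero
  have h32 : (3 / 2 : ℝ) ≠ 0 := by norm_num
  have := mul_eq_zero.mp (by linarith [this] : (3/2 : ℝ) * (f₁' t * (3 * κ * ε₁ * f₁' t
        - Real.exp (2 * f₂ t) * (f₁' t - f₂' t)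
          * (4 * (f₂' t) ^ 2 + 5 * f₁' t * f₂' t + τ * ε₁))) = 0)
  tauto
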